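/- Let b ∈ (0, 3/4). There is a constant C > 0 such that for all ε ∈ (0,1) and t ≥ 0, ∫₀ᵗ (1+t-s)^{-3/4}(1+s/ε)^{-b}(1+s)^{-1/4} ds ≤ C ε^b (1+t)^{-b} + C(1+t/ε)^{-b}. -/

import Mathlib

open MeasureTheory Set intervalIntegral

private lemma rpow_neg_antitone {x y p : ℝ} (hx : 0 < x) (hxy : x ≤ y) (hp : 0 ≤ p) :
    y ^ (-p) ≤ x ^ (-p) :=
  Real.rpow_le_rpow_of_nonpos hx hxy (neg_nonpos.mpr hp)

private lemma half_rpow_bound {x p : ℝ} (hx : 0 ≤ x) (hp : 0 ≤ p) (hp1 : p ≤ 1) :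
    (1 + x / 2) ^ (-p) ≤ 2 * (1 + x) ^ (-p) := by
  have h2 : (0:ℝ) < 1 + x / 2 := by linarith
  have key : (2 * (1 + x / 2)) ^ (-p) ≤ (1 + x) ^ (-p) :=
    rpow_neg_antitone (by linarith) (by linarith) hp
  have hmul : (2 * (1 + x / 2)) ^ (-p) = 2 ^ (-p) * (1 + x / 2) ^ (-p) :=
    Real.mul_rpow (by norm_num) h2.le
  have h2p : (2:ℝ) ^ p ≤ 2 := by
    calc (2:ℝ) ^ p ≤ 2 ^ (1:ℝ) := Real.rpow_le_rpow_of_exponent_le one_le_two hp1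
    _ = 2 := Real.rpow_one 2
  calc (1 + x / 2) ^ (-p) = 2 ^ p * (2 ^ (-p) * (1 + x / 2) ^ (-p)) := by
        rw [← mul_assoc, ← Real.rpow_add two_pos]; simp
    _ = 2 ^ p * (2 * (1 + x / 2)) ^ (-p) := by rw [hmul]
    _ ≤ 2 ^ p * (1 + x) ^ (-p) :=
        mul_le_mul_of_nonneg_left key (Real.rpow_nonneg (by norm_num) p)
    _ ≤ 2 * (1 + x) ^ (-p) :=
        mul_le_mul_of_nonneg_right h2p (Real.rpow_nonneg (by linarith) _)

set_option maxHeartbeats 1000000 in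
/-- Convolution estimate with fractional initial-layer exponent b ∈ (0, 3/4):
    ∫₀ᵗ (1+t-s)^{-3/4}(1+s/ε)^{-b}(1+s)^{-1/4} ds ≤ Cε^b(1+t)^{-b} + C(1+t/ε)^{-b}. -/
theorem convolution_initial_layer_frac (b : ℝ) (hb : b ∈ Set.Ioo (0 : ℝ) (3 / 4)) :
    ∃ C > 0, ∀ ε : ℝ, ε ∈ Set.Ioo (0 : ℝ) 1 → ∀ t : ℝ, 0 ≤ t →
      (∫ s in (0 : ℝ)..t,
          (1 + t - s) ^ (-(3 : ℝ) / 4) * (1 + s / ε) ^ (-b) * (1 + s) ^ (-(1 : ℝ) / 4)) ≤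
        C * ε ^ b * (1 + t) ^ (-b) + C * (1 + t / ε) ^ (-b) := by
  obtain ⟨hb0, hb34⟩ := hb
  have h34 : (0:ℝ) < 3/4 - b := by linarith
  refine ⟨4 / (3/4 - b) + 8, by positivity, ?_⟩
  rintro ε ⟨hε0, hε1⟩ t ht
  set T : ℝ := t / 2 with hT
  have h0T : (0:ℝ) ≤ T := by positivity
  have hTt : T ≤ t := by simp only [hT]; linarith
  set F : ℝ → ℝ := fun s =>
      (1 + t - s) ^ (-(3 : ℝ) / 4) * (1 + s / ε) ^ (-b) * (1 + s) ^ (-(1 : ℝ) / 4) with hF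
  -- continuity / integrability of F on [0, t]
  have hFc : ContinuousOn F (Icc 0 t) := by
    apply ContinuousOn.mul
    apply ContinuousOn.mul
    · exact (continuousOn_const.sub continuousOn_id).rpow_const
        fun s hs => Or.inl (by show (1 + t - s) ≠ 0; rcases hs with ⟨h1, h2⟩; intro h; linarith)
    · exact (continuousOn_const.add (continuousOn_id.div_const ε)).rpow_const
        fun s hs => Or.inl (by show 1 + s / ε ≠ 0; rcases hs with ⟨h1, h2⟩; have := div_nonneg h1 hε0.le; exact (by linarith : (0:ℝ) < 1 + s / ε).ne')
    · exact (continuousOn_const.add continuousOn_id).rpow_const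
        fun s hs => Or.inl (by show 1 + s ≠ 0; rcases hs with ⟨h1, h2⟩; exact (by linarith : (0:ℝ) < 1 + s).ne')
  have hF1 : IntervalIntegrable F volume 0 T :=
    (hFc.mono (Icc_subset_Icc le_rfl hTt)).intervalIntegrable_of_Icc h0T
  have hF2 : IntervalIntegrable F volume T t :=
    (hFc.mono (Icc_subset_Icc h0T le_rfl)).intervalIntegrable_of_Icc hTt
  -- split
  have hsplit : (∫ s in (0:ℝ)..t, F s) = (∫ s in (0:ℝ)..T, F s) + ∫ s in T..t, F s :=
    (integral_add_adjacent_intervals hF1 hF2).symm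
  -- ### piece 1
  set c1 : ℝ := ε ^ b * (1 + T) ^ (-(3:ℝ)/4) with hc1
  have hc1nn : 0 ≤ c1 := by positivity
  have hg1 : IntervalIntegrable (fun s => c1 * s ^ (-(b + 1/4))) volume 0 T :=
    (intervalIntegral.intervalIntegrable_rpow' (by linarith)).const_mul c1
  have hp1 : (∫ s in (0:ℝ)..T, F s) ≤ ∫ s in (0:ℝ)..T, c1 * s ^ (-(b + 1/4)) := by
    rw [intervalIntegral.integral_of_le h0T, intervalIntegral.integral_of_le h0T]
    refine setIntegral_mono_on hF1.1 hg1.1 measurableSet_Ioc ?_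
    rintro s ⟨hs0, hsT⟩
    have hA : (1 + t - s) ^ (-(3:ℝ)/4) ≤ (1 + T) ^ (-(3:ℝ)/4) := by
      rw [show (-(3:ℝ)/4) = -(3/4) by norm_num]
      exact rpow_neg_antitone (by linarith) (by simp only [hT] at hsT ⊢; linarith)
        (by norm_num)
    have hB : (1 + s / ε) ^ (-b) ≤ ε ^ b * s ^ (-b) := by
      have hsε : (0:ℝ) < s / ε := by positivity
      have h1 : (1 + s / ε) ^ (-b) ≤ (s / ε) ^ (-b) :=
        rpow_neg_antitone hsε (by linarith) hb0.le
      have h2 : (s / ε) ^ (-b) = ε ^ b * s ^ (-b) := by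
        rw [Real.div_rpow hs0.le hε0.le, Real.rpow_neg hε0.le, div_eq_mul_inv, inv_inv,
          mul_comm]
      linarith [h1, h2.le]
    have hC : (1 + s) ^ (-(1:ℝ)/4) ≤ s ^ (-(1:ℝ)/4) := by
      rw [show (-(1:ℝ)/4) = -(1/4) by norm_num]
      exact rpow_neg_antitone hs0 (by linarith) (by norm_num)
    calc (1 + t - s) ^ (-(3:ℝ)/4) * (1 + s / ε) ^ (-b) * (1 + s) ^ (-(1:ℝ)/4)
        ≤ (1 + T) ^ (-(3:ℝ)/4) * (ε ^ b * s ^ (-b)) * s ^ (-(1:ℝ)/4) := by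
          apply mul_le_mul (mul_le_mul hA hB (Real.rpow_nonneg (by positivity) _)
            (Real.rpow_nonneg (by positivity) _)) hC
            (Real.rpow_nonneg (by linarith) _)
          positivity
      _ = c1 * s ^ (-(b + 1/4)) := by
          rw [hc1, show -(b + 1/4) = -b + (-(1:ℝ)/4) by ring, Real.rpow_add hs0]
          ring
  have hp1v : (∫ s in (0:ℝ)..T, c1 * s ^ (-(b + 1/4)))
      = c1 * (T ^ (3/4 - b) / (3/4 - b)) := by
    rw [intervalIntegral.integral_const_mul, integral_rpow (Or.inl (by linarith)),
      show -(b + 1/4) + 1 = 3/4 - b by ring, Real.zero_rpow (by linarith : 3/4 - b ≠ 0)]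
    ring
  have hp1final : c1 * (T ^ (3/4 - b) / (3/4 - b))
      ≤ (2 / (3/4 - b)) * ε ^ b * (1 + t) ^ (-b) := by
    have hTle : T ^ (3/4 - b) ≤ (1 + t) ^ (3/4 - b) :=
      Real.rpow_le_rpow h0T (by simp only [hT]; linarith) h34.le
    have hhalf : (1 + T) ^ (-(3:ℝ)/4) ≤ 2 * (1 + t) ^ (-(3:ℝ)/4) := by
      rw [show (-(3:ℝ)/4) = -(3/4) by norm_num]
      exact half_rpow_bound ht (by norm_num) (by norm_num)
    have hmerge : (1 + t) ^ (-(3:ℝ)/4) * (1 + t) ^ (3/4 - b) = (1 + t) ^ (-b) := by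
      rw [← Real.rpow_add (by linarith)]; ring_nf
    calc c1 * (T ^ (3/4 - b) / (3/4 - b))
        ≤ (ε ^ b * (2 * (1 + t) ^ (-(3:ℝ)/4))) * ((1 + t) ^ (3/4 - b) / (3/4 - b)) := by
          apply mul_le_mul
          · exact mul_le_mul_of_nonneg_left hhalf (by positivity)
          · exact div_le_div_of_nonneg_right hTle h34.le
          · positivity
          · positivity
      _ = (2 / (3/4 - b)) * ε ^ b * ((1 + t) ^ (-(3:ℝ)/4) * (1 + t) ^ (3/4 - b)) := by ring
      _ = (2 / (3/4 - b)) * ε ^ b * (1 + t) ^ (-b) := by rw [hmerge]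
  -- ### piece 2
  set c2 : ℝ := (1 + T / ε) ^ (-b) * (1 + T) ^ (-(1:ℝ)/4) with hc2
  have hc2nn : 0 ≤ c2 := by positivity
  have hg2 : IntervalIntegrable (fun s => c2 * (1 + t - s) ^ (-(3:ℝ)/4)) volume T t := by
    apply ContinuousOn.intervalIntegrable_of_Icc hTt
    apply continuousOn_const.mul
    exact (continuousOn_const.sub continuousOn_id).rpow_const
      fun s hs => Or.inl (by show (1 + t - s) ≠ 0; rcases hs with ⟨h1, h2⟩; intro h; linarith)
  have hp2 : (∫ s in T..t, F s) ≤ ∫ s in T..t, c2 * (1 + t - s) ^ (-(3:ℝ)/4) := by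
    rw [intervalIntegral.integral_of_le hTt, intervalIntegral.integral_of_le hTt]
    refine setIntegral_mono_on hF2.1 hg2.1 measurableSet_Ioc ?_
    rintro s ⟨hsT, hst⟩
    have hs0 : (0:ℝ) ≤ s := h0T.trans hsT.le
    have hB : (1 + s / ε) ^ (-b) ≤ (1 + T / ε) ^ (-b) := by
      have hTε : 0 ≤ T / ε := div_nonneg h0T hε0.le
      have hdiv : T / ε ≤ s / ε := div_le_div_of_nonneg_right hsT.le hε0.le
      exact rpow_neg_antitone (by linarith) (by linarith) hb0.le
    have hC : (1 + s) ^ (-(1:ℝ)/4) ≤ (1 + T) ^ (-(1:ℝ)/4) := by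
      rw [show (-(1:ℝ)/4) = -(1/4) by norm_num]
      exact rpow_neg_antitone (by linarith) (by linarith) (by norm_num)
    calc (1 + t - s) ^ (-(3:ℝ)/4) * (1 + s / ε) ^ (-b) * (1 + s) ^ (-(1:ℝ)/4)
        ≤ (1 + t - s) ^ (-(3:ℝ)/4) * (1 + T / ε) ^ (-b) * (1 + T) ^ (-(1:ℝ)/4) := by
          apply mul_le_mul (mul_le_mul_of_nonneg_left hB
            (Real.rpow_nonneg (by linarith) _)) hC
            (Real.rpow_nonneg (by linarith) _)
            (mul_nonneg (Real.rpow_nonneg (by linarith) _)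
              (Real.rpow_nonneg (by have := div_nonneg h0T hε0.le; linarith) _))
      _ = c2 * (1 + t - s) ^ (-(3:ℝ)/4) := by rw [hc2]; ring
  have hp2v : (∫ s in T..t, c2 * (1 + t - s) ^ (-(3:ℝ)/4))
      = c2 * (((1 + t - T) ^ ((1:ℝ)/4) - 1) * 4) := by
    rw [intervalIntegral.integral_const_mul]
    have : (∫ s in T..t, (1 + t - s) ^ (-(3:ℝ)/4))
        = ∫ u in (1 + t - t)..(1 + t - T), u ^ (-(3:ℝ)/4) :=
      intervalIntegral.integral_comp_sub_left (fun u => u ^ (-(3:ℝ)/4)) (1 + t)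
    rw [this, integral_rpow (Or.inl (by norm_num)),
      show (-(3:ℝ)/4) + 1 = 1/4 by norm_num,
      show (1 + t - t) = (1:ℝ) by ring, Real.one_rpow]
    ring
  have hp2final : c2 * (((1 + t - T) ^ ((1:ℝ)/4) - 1) * 4) ≤ 8 * (1 + t / ε) ^ (-b) := by
    have hTeq : 1 + t - T = 1 + T := by simp only [hT]; ring
    have hkey : ((1 + T) ^ ((1:ℝ)/4) - 1) * (1 + T) ^ (-(1:ℝ)/4) ≤ 1 := by
      have h1 : ((1 + T) ^ ((1:ℝ)/4) - 1) ≤ (1 + T) ^ ((1:ℝ)/4) := by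
        nlinarith [Real.rpow_nonneg (show (0:ℝ) ≤ 1 + T by linarith) ((1:ℝ)/4)]
      calc ((1 + T) ^ ((1:ℝ)/4) - 1) * (1 + T) ^ (-(1:ℝ)/4)
          ≤ (1 + T) ^ ((1:ℝ)/4) * (1 + T) ^ (-(1:ℝ)/4) :=
            mul_le_mul_of_nonneg_right h1 (Real.rpow_nonneg (by linarith) _)
        _ = 1 := by
            rw [← Real.rpow_add (by linarith : (0:ℝ) < 1 + T)]
            norm_num
    have hhalfε : (1 + T / ε) ^ (-b) ≤ 2 * (1 + t / ε) ^ (-b) := by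
      have : T / ε = (t / ε) / 2 := by rw [hT]; ring
      rw [this]
      exact half_rpow_bound (by positivity) hb0.le (by linarith)
    calc c2 * (((1 + t - T) ^ ((1:ℝ)/4) - 1) * 4)
        = 4 * ((1 + T / ε) ^ (-b)) * (((1 + T) ^ ((1:ℝ)/4) - 1) * (1 + T) ^ (-(1:ℝ)/4)) := by
          rw [hTeq, hc2]; ring
      _ ≤ 4 * ((1 + T / ε) ^ (-b)) * 1 := by
          apply mul_le_mul_of_nonneg_left hkey (by positivity)
      _ = 4 * (1 + T / ε) ^ (-b) := by ring
      _ ≤ 4 * (2 * (1 + t / ε) ^ (-b)) :=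
          mul_le_mul_of_nonneg_left hhalfε (by norm_num)
      _ = 8 * (1 + t / ε) ^ (-b) := by ring
  -- ### combine
  have hfin1 : (2 / (3/4 - b)) * ε ^ b * (1 + t) ^ (-b)
      ≤ (4 / (3/4 - b) + 8) * ε ^ b * (1 + t) ^ (-b) := by
    apply mul_le_mul_of_nonneg_right _ (Real.rpow_nonneg (by linarith) _)
    apply mul_le_mul_of_nonneg_right _ (Real.rpow_nonneg hε0.le _)
    have : (2:ℝ) / (3/4 - b) ≤ 4 / (3/4 - b) :=
      div_le_div_of_nonneg_right (by norm_num) h34.le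
    linarith
  have hfin2 : (8:ℝ) * (1 + t / ε) ^ (-b)
      ≤ (4 / (3/4 - b) + 8) * (1 + t / ε) ^ (-b) := by
    apply mul_le_mul_of_nonneg_right _ (Real.rpow_nonneg (by positivity) _)
    have : (0:ℝ) ≤ 4 / (3/4 - b) := by positivity
    linarith
  calc (∫ s in (0:ℝ)..t, F s) = (∫ s in (0:ℝ)..T, F s) + ∫ s in T..t, F s := hsplit
    _ ≤ (2 / (3/4 - b)) * ε ^ b * (1 + t) ^ (-b) + 8 * (1 + t / ε) ^ (-b) := by
        apply add_le_add
        · exact hp1.trans (hp1v.le.trans hp1final)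
        · exact hp2.trans (hp2v.le.trans hp2final)
    _ ≤ (4 / (3/4 - b) + 8) * ε ^ b * (1 + t) ^ (-b)
        + (4 / (3/4 - b) + 8) * (1 + t / ε) ^ (-b) := add_le_add hfin1 hfin2
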